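/- Let Θ₀, Θ∞ ∈ ℂ, let U ⊆ ℂ be a nonempty open connected set, and let q, p : U → ℂ be differentiable functions with q(t) ≠ 0 for all t ∈ U that solve the Its–Prokhorov Hamiltonian system for P_IV with parameters Θ₀, Θ∞. Define y(t) = q(t) and z(t) = (q(t)² − 4p(t)q(t) + 2q(t)·t + 4Θ₀)/4. Then y, z are differentiable and solve the Jimbo–Miwa Hamiltonian system for P_IV with the same parameters Θ₀, Θ∞ on U. -/

import Mathlib

open Complex

/-- the birational change of variables `y = q`,
`z = (q² − 4pq + 2qt + 4Θ₀)/4` maps solutions of the Its–Prokhorov Hamiltonian system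
for P_IV to solutions of the Jimbo–Miwa Hamiltonian system for P_IV with the
same parameters. -/
theorem its_prokhorov_to_jimbo_miwa_PIV
    (Θ₀ Θoo : ℂ) (U : Set ℂ)
    (hUo : IsOpen U) (hUne : U.Nonempty) (hUc : IsPreconnected U)
    (q p : ℂ → ℂ)
    (hq0 : ∀ t ∈ U, q t ≠ 0)
    (hq : ∀ t ∈ U, HasDerivAt q (4 * p t * q t) t)
    (hp : ∀ t ∈ U, HasDerivAt p
      (-2 * (p t) ^ 2 + 3 * (q t) ^ 2 / 8 + q t * t + t ^ 2 / 2 - Θoo + 1 / 2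
        - 2 * Θ₀ ^ 2 / (q t) ^ 2) t)
    (y z : ℂ → ℂ)
    (hy_def : ∀ t, y t = q t)
    (hz_def : ∀ t, z t = ((q t) ^ 2 - 4 * p t * q t + 2 * q t * t + 4 * Θ₀) / 4) :
    ∀ t ∈ U,
      HasDerivAt y (-4 * z t + (y t) ^ 2 + 2 * t * y t + 4 * Θ₀) t ∧
      HasDerivAt z
        (-(2 / y t) * (z t) ^ 2 + (-(y t) + 4 * Θ₀ / y t) * z t + (Θ₀ + Θoo) * y t) t := by
  have hyq : y = q := funext hy_def
  have hzq : z = fun t => ((q t) ^ 2 - 4 * p t * q t + 2 * q t * t + 4 * Θ₀) / 4 :=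
    funext hz_def
  subst hyq hzq
  intro t ht
  have h0 := hq0 t ht
  have hq' := hq t ht
  have hp' := hp t ht
  constructor
  · convert hq' using 1
    field_simp
    ring
  · have hD := (((((hq'.pow 2).sub ((hp'.const_mul 4).mul hq')).add
        ((hq'.const_mul 2).mul (hasDerivAt_id t))).add (hasDerivAt_const t (4 * Θ₀))).div_const 4)
    simp only [id, Pi.add_apply, Pi.sub_apply, Pi.mul_apply, Pi.pow_apply] at hD
    refine hD.congr_deriv ?_
    field_simp
    ring
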